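/- In a fuzzy cycle, all β-strong edges have equal weight. -/

import Mathlib

open Finset

/-- A fuzzy graph on vertex type `V`. -/
structure FuzzyGraph (V : Type*) where
  ρ : V → ℝ
  υ : V → V → ℝ
  ρ_nonneg : ∀ a, 0 ≤ ρ a
  ρ_le_one : ∀ a, ρ a ≤ 1
  υ_nonneg : ∀ a b, 0 ≤ υ a b
  symm : ∀ a b, υ a b = υ b a
  υ_le : ∀ a b, υ a b ≤ min (ρ a) (ρ b)
  loopless : ∀ a, υ a a = 0

namespace FuzzyGraph

variable {V : Type*} [Fintype V] [DecidableEq V]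

/-- Strength of a path given by its list of successive vertices:
the minimum of the weights of its edges. -/
def pathStrength (X : FuzzyGraph V) : List V → ℝ
  | [] => 0
  | [_] => 0
  | [a, b] => X.υ a b
  | a :: b :: c :: l => min (X.υ a b) (X.pathStrength (b :: c :: l))

/-- `l` is a path from `a` to `b` : distinct vertices joined by positive-weight edges. -/
def IsPath (X : FuzzyGraph V) (a b : V) (l : List V) : Prop :=
  l.Nodup ∧ l.head? = some a ∧ l.getLast? = some b ∧ 2 ≤ l.length ∧
    l.Chain' (fun x y => 0 < X.υ x y)

/-- Strength of connectedness between two vertices: maximum strength of a path. -/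
noncomputable def conn (X : FuzzyGraph V) (a b : V) : ℝ :=
  sSup {s | ∃ l : List V, X.IsPath a b l ∧ s = X.pathStrength l}

/-- Delete the edge `ab` (set its weight to `0`). -/
def deleteEdge (X : FuzzyGraph V) (a b : V) : FuzzyGraph V where
  ρ := X.ρ
  υ x y := if (x = a ∧ y = b) ∨ (x = b ∧ y = a) then 0 else X.υ x y
  ρ_nonneg := X.ρ_nonneg
  ρ_le_one := X.ρ_le_one
  υ_nonneg := by
    intro x y; try dsimp only
    split_ifs
    · exact le_rfl
    · exact X.υ_nonneg x y
  symm := by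
    intro x y; try dsimp only
    by_cases h : (x = a ∧ y = b) ∨ (x = b ∧ y = a)
    · rw [if_pos h, if_pos (by tauto)]
    · rw [if_neg h, if_neg (by tauto), X.symm]
  υ_le := by
    intro x y; try dsimp only
    split_ifs
    · exact le_min (X.ρ_nonneg x) (X.ρ_nonneg y)
    · exact X.υ_le x y
  loopless := by
    intro x; try dsimp only
    split_ifs
    · rfl
    · exact X.loopless x

/-- `ab` is a strong edge (α- or β-strong). -/
def StrongEdge (X : FuzzyGraph V) (a b : V) : Prop :=
  0 < X.υ a b ∧ (X.deleteEdge a b).conn a b ≤ X.υ a b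

/-- `ab` is an α-strong edge. -/
def AlphaStrong (X : FuzzyGraph V) (a b : V) : Prop :=
  0 < X.υ a b ∧ (X.deleteEdge a b).conn a b < X.υ a b

/-- `ab` is a β-strong edge. -/
def BetaStrong (X : FuzzyGraph V) (a b : V) : Prop :=
  0 < X.υ a b ∧ X.υ a b = (X.deleteEdge a b).conn a b

/-- `ab` is a δ-edge. -/
def DeltaEdge (X : FuzzyGraph V) (a b : V) : Prop :=
  0 < X.υ a b ∧ X.υ a b < (X.deleteEdge a b).conn a b

/-- The minimum weight of a strong edge incident at `a`. -/
noncomputable def minInc (X : FuzzyGraph V) (a : V) : ℝ :=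
  sInf {w | ∃ b, X.StrongEdge a b ∧ w = X.υ a b}

/-- The weight of a set of vertices. -/
noncomputable def weight (X : FuzzyGraph V) (S : Finset V) : ℝ :=
  ∑ a ∈ S, X.minInc a

/-- `D` is a strong dominating set. -/
def IsSDS (X : FuzzyGraph V) (D : Finset V) : Prop :=
  ∀ v, v ∉ D → ∃ a ∈ D, X.StrongEdge a v

/-- `D` is a minimal strong dominating set. -/
def IsMinimalSDS (X : FuzzyGraph V) (D : Finset V) : Prop :=
  X.IsSDS D ∧ ∀ a ∈ D, ¬ X.IsSDS (D.erase a)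

/-- `D` is a minimum (least weight) strong dominating set. -/
def IsMinimumSDS (X : FuzzyGraph V) (D : Finset V) : Prop :=
  X.IsSDS D ∧ ∀ D' : Finset V, X.IsSDS D' → X.weight D ≤ X.weight D'

/-- The strong domination degree of a vertex. -/
noncomputable def sd (X : FuzzyGraph V) (u : V) : ℝ :=
  sInf {w | ∃ D : Finset V, X.IsMinimalSDS D ∧ u ∈ D ∧ w = X.weight D}

/-- The strong domination number. -/
noncomputable def gammaS (X : FuzzyGraph V) : ℝ :=
  sInf {w | ∃ D : Finset V, X.IsSDS D ∧ w = X.weight D}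

/-- The upper strong domination number. -/
noncomputable def GammaS (X : FuzzyGraph V) : ℝ :=
  sSup {w | ∃ D : Finset V, X.IsMinimalSDS D ∧ w = X.weight D}

/-- The strong domination index. -/
noncomputable def SDI (X : FuzzyGraph V) : ℝ := ∑ u : V, X.sd u

/-- `X` is connected. -/
def Connected (X : FuzzyGraph V) : Prop := ∀ a b : V, a ≠ b → ∃ l, X.IsPath a b l

/-- `X` is a strong fuzzy graph: every edge is strong. -/
def IsStrongFG (X : FuzzyGraph V) : Prop := ∀ a b, 0 < X.υ a b → X.StrongEdge a b

/-- Underlying (support) simple graph. -/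
def support (X : FuzzyGraph V) : SimpleGraph V where
  Adj a b := 0 < X.υ a b
  symm := by
    constructor; intro a b (h : 0 < X.υ a b); show 0 < X.υ b a; rw [X.symm]; exact h
  loopless := by
    constructor; intro a (h : 0 < X.υ a a); rw [X.loopless] at h; exact lt_irrefl 0 h

/-- `X` is a fuzzy tree. -/
def IsFuzzyTree (X : FuzzyGraph V) : Prop :=
  ∃ F : FuzzyGraph V, F.ρ = X.ρ ∧ (∀ a b, F.υ a b = X.υ a b ∨ F.υ a b = 0) ∧
    F.support.IsTree ∧ ∀ a b, 0 < X.υ a b → F.υ a b = 0 → X.υ a b < F.conn a b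

/-- The size of a fuzzy graph: the sum of all edge weights. -/
noncomputable def size (X : FuzzyGraph V) : ℝ := (∑ a : V, ∑ b : V, X.υ a b) / 2

/-- The underlying graph of `X` is a cycle. -/
def IsCycleGraph (X : FuzzyGraph V) : Prop :=
  ∃ n : ℕ, 3 ≤ n ∧ ∃ f : ZMod n ≃ V,
    ∀ x y : V, 0 < X.υ x y ↔ ∃ i : ZMod n, (x = f i ∧ y = f (i + 1)) ∨ (x = f (i + 1) ∧ y = f i)

/-- `X` is a fuzzy cycle: a cycle with at least two edges of minimum weight. -/
def IsFuzzyCycle (X : FuzzyGraph V) : Prop :=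
  X.IsCycleGraph ∧ ∃ a b c d : V, 0 < X.υ a b ∧ 0 < X.υ c d ∧
    Sym2.mk (a, b) ≠ Sym2.mk (c, d) ∧ X.υ a b = X.υ c d ∧
    ∀ x y, 0 < X.υ x y → X.υ a b ≤ X.υ x y

/-- A set of pairwise fuzzy independent vertices. -/
def IsFuzzyIndep (X : FuzzyGraph V) (S : Finset V) : Prop :=
  ∀ a ∈ S, ∀ b ∈ S, a ≠ b → ¬ X.StrongEdge a b

/-- The strong independent domination number. -/
noncomputable def iS (X : FuzzyGraph V) : ℝ :=
  sInf {w | ∃ D : Finset V, X.IsSDS D ∧ X.IsFuzzyIndep D ∧ w = X.weight D}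

/-- The strong independence number. -/
noncomputable def betaS (X : FuzzyGraph V) : ℝ :=
  sSup {w | ∃ S : Finset V, X.IsFuzzyIndep S ∧ w = X.weight S}

/-- Closed strong neighborhood. -/
def closedNbhd (X : FuzzyGraph V) (a : V) : Set V := insert a {b | X.StrongEdge a b}

/-- Open strong neighborhood. -/
def openNbhd (X : FuzzyGraph V) (a : V) : Set V := {b | X.StrongEdge a b}

/-- Private neighborhood of `a` with respect to `S`. -/
def privNbhd (X : FuzzyGraph V) (a : V) (S : Finset V) : Set V :=
  X.closedNbhd a \ ⋃ b ∈ S.erase a, X.closedNbhd b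

/-- `S` is a fuzzy irredundant set. -/
def IsIrredundant (X : FuzzyGraph V) (S : Finset V) : Prop :=
  ∀ a ∈ S, (X.privNbhd a S).Nonempty

/-- `S` is a maximal fuzzy irredundant set. -/
def IsMaximalIrredundant (X : FuzzyGraph V) (S : Finset V) : Prop :=
  X.IsIrredundant S ∧ ∀ v ∉ S, ¬ X.IsIrredundant (insert v S)

/-- The strong irredundance number. -/
noncomputable def irS (X : FuzzyGraph V) : ℝ :=
  sInf {w | ∃ S : Finset V, X.IsMaximalIrredundant S ∧ w = X.weight S}

/- ========== Auxiliary lemmas ========== -/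

lemma pathStrength_cons_cons (X : FuzzyGraph V) (a b : V) (l : List V) (h : l ≠ []) :
    X.pathStrength (a :: b :: l) = min (X.υ a b) (X.pathStrength (b :: l)) := by
  cases l with
  | nil => exact absurd rfl h
  | cons c t => rfl

lemma pathStrength_cons_le (X : FuzzyGraph V) (x y : V) (t : List V) :
    X.pathStrength (x :: y :: t) ≤ X.υ x y := by
  cases t with
  | nil => exact le_rfl
  | cons c t => exact min_le_left _ _

lemma pathStrength_append_le (X : FuzzyGraph V) :
    ∀ (l : List V) (x y : V) (t : List V),
      X.pathStrength (l ++ x :: y :: t) ≤ X.υ x y := by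
  intro l
  induction l with
  | nil => intro x y t; exact X.pathStrength_cons_le x y t
  | cons z l IH =>
    intro x y t
    cases l with
    | nil =>
      show X.pathStrength (z :: x :: y :: t) ≤ X.υ x y
      rw [X.pathStrength_cons_cons z x (y :: t) (by simp)]
      exact le_trans (min_le_right _ _) (X.pathStrength_cons_le x y t)
    | cons w l' =>
      have h1 : (z :: (w :: l')) ++ x :: y :: t
          = z :: w :: (l' ++ x :: y :: t) := by simp
      rw [h1, X.pathStrength_cons_cons z w _ (by simp)]
      exact le_trans (min_le_right _ _) (IH x y t)

lemma deleteEdge_υ_le (X : FuzzyGraph V) (a b x y : V) :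
    (X.deleteEdge a b).υ x y ≤ X.υ x y := by
  show (if _ then _ else _) ≤ _
  split_ifs
  · exact X.υ_nonneg x y
  · exact le_rfl

lemma deleteEdge_pos (X : FuzzyGraph V) {a b x y : V}
    (h : 0 < (X.deleteEdge a b).υ x y) :
    0 < X.υ x y ∧ ¬((x = a ∧ y = b) ∨ (x = b ∧ y = a)) := by
  by_cases hc : (x = a ∧ y = b) ∨ (x = b ∧ y = a)
  · exfalso
    have : (X.deleteEdge a b).υ x y = 0 := if_pos hc
    rw [this] at h
    exact lt_irrefl 0 h
  · have : (X.deleteEdge a b).υ x y = X.υ x y := if_neg hc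
    rw [this] at h
    exact ⟨h, hc⟩

lemma forced_path (X : FuzzyGraph V) {n : ℕ} (hn : 3 ≤ n) (f : ZMod n ≃ V)
    (hcyc : ∀ x y : V, 0 < X.υ x y ↔ ∃ s : ZMod n,
      (x = f s ∧ y = f (s+1)) ∨ (x = f (s+1) ∧ y = f s))
    (i : ZMod n) :
    ∀ (l : List V) (k : ℕ), 1 ≤ k → k ≤ n - 1 → l.Nodup →
      l.head? = some (f (i - (k : ZMod n))) → l.getLast? = some (f (i + 1)) →
      l.Chain' (fun x y => 0 < (X.deleteEdge (f i) (f (i+1))).υ x y) →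
      (∀ x ∈ l, ∀ j : ℕ, j < k → x ≠ f (i - (j : ZMod n))) →
      l = (List.range' k (n - k)).map (fun t : ℕ => f (i - (t : ZMod n))) := by
  haveI : NeZero n := ⟨by omega⟩
  have hcastinj : ∀ k j : ℕ, k < n → j < n → (k : ZMod n) = (j : ZMod n) → k = j := by
    intro k j hk hj h
    have := congrArg ZMod.val h
    rwa [ZMod.val_cast_of_lt hk, ZMod.val_cast_of_lt hj] at this
  have hneg1 : ((n - 1 : ℕ) : ZMod n) = -1 := by
    have h1 : (((n - 1) + 1 : ℕ) : ZMod n) = 0 := by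
      rw [show n - 1 + 1 = n by omega, ZMod.natCast_self]
    push_cast at h1
    linear_combination h1
  intro l
  induction l with
  | nil => intro k _ _ _ hh; simp at hh
  | cons x t IH =>
    intro k hk1 hk2 hnd hh hlast hch havoid
    have hx : x = f (i - (k : ZMod n)) := by
      simpa using hh
    cases t with
    | nil =>
      have hxb : x = f (i + 1) := by simpa using hlast
      have hkn : k = n - 1 := by
        apply hcastinj k (n-1) (by omega) (by omega)
        rw [hneg1]
        have := f.injective (hx.symm.trans hxb)
        linear_combination -this
      subst hkn
      have h1 : n - (n - 1) = 1 := by omega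
      rw [h1, List.range'_one, List.map_singleton, hx]
    | cons y t' =>
      simp only [List.Chain', List.isChain_cons_cons] at hch
      obtain ⟨hxy, hch'⟩ := hch
      obtain ⟨hpos, hnd2⟩ := X.deleteEdge_pos hxy
      obtain ⟨s, hs | hs⟩ := (hcyc x y).mp hpos
      · -- y = f (i - (k-1)) : contradicts avoidance
        exfalso
        have hsk : s = i - (k : ZMod n) := f.injective (hs.1.symm.trans hx)
        have hy : y = f (i - ((k - 1 : ℕ) : ZMod n)) := by
          rw [hs.2, hsk]
          congr 1
          rw [Nat.cast_sub hk1, Nat.cast_one]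
          ring
        exact havoid y (List.mem_cons_of_mem x (List.mem_cons_self (a := y) (l := t')))
          (k - 1) (by omega) hy
      · -- y = f (i - (k+1))
        have hsk : s = i - ((k + 1 : ℕ) : ZMod n) := by
          have h1 : s + 1 = i - (k : ZMod n) := f.injective (hs.1.symm.trans hx)
          push_cast
          linear_combination h1
        have hy : y = f (i - ((k + 1 : ℕ) : ZMod n)) := by rw [hs.2, hsk]
        by_cases hkn : k = n - 1
        · exfalso
          have h1 : ((k + 1 : ℕ) : ZMod n) = 0 := by
            have : k + 1 = n := by omega
            rw [this, ZMod.natCast_self]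
          have hy0 : y = f (i - ((0 : ℕ) : ZMod n)) := by
            rw [hy, h1]; norm_num
          exact havoid y (List.mem_cons_of_mem x (List.mem_cons_self (a := y) (l := t')))
            0 (by omega) hy0
        · have ht : y :: t' = (List.range' (k+1) (n - (k+1))).map
              (fun t : ℕ => f (i - (t : ZMod n))) := by
            apply IH (k+1) (by omega) (by omega) (List.nodup_cons.mp hnd).2
            · simpa using hy
            · rwa [List.getLast?_cons_cons] at hlast
            · exact hch'
            · intro z hz j hj
              rcases Nat.lt_or_ge j k with hjk | hjk
              · exact havoid z (List.mem_cons_of_mem x hz) j hjk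
              · have hjeq : j = k := by omega
                subst hjeq
                intro hzx
                rw [← hx] at hzx
                exact (List.nodup_cons.mp hnd).1 (hzx ▸ hz)
          have hr : List.range' k (n - k) = k :: List.range' (k+1) (n - (k+1)) := by
            have h2 : n - k = (n - (k+1)) + 1 := by omega
            rw [h2, List.range'_succ]
          rw [hr, List.map_cons, ← hx, ← ht]

lemma path_eq (X : FuzzyGraph V) {n : ℕ} (hn : 3 ≤ n) (f : ZMod n ≃ V)
    (hcyc : ∀ x y : V, 0 < X.υ x y ↔ ∃ s : ZMod n,
      (x = f s ∧ y = f (s+1)) ∨ (x = f (s+1) ∧ y = f s))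
    (i : ZMod n) (l : List V)
    (hp : (X.deleteEdge (f i) (f (i+1))).IsPath (f i) (f (i+1)) l) :
    l = (List.range n).map (fun t : ℕ => f (i - (t : ZMod n))) := by
  haveI : NeZero n := ⟨by omega⟩
  obtain ⟨hnd, hh, hlast, hlen, hch⟩ := hp
  cases l with
  | nil => simp at hh
  | cons x t =>
    have hx : x = f i := by simpa using hh
    cases t with
    | nil => simp at hlen
    | cons y t' =>
      simp only [List.Chain', List.isChain_cons_cons] at hch
      obtain ⟨hxy, hch'⟩ := hch
      obtain ⟨hpos, hnd2⟩ := X.deleteEdge_pos hxy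
      obtain ⟨s, hs | hs⟩ := (hcyc x y).mp hpos
      · exfalso
        have hsi : s = i := f.injective (hs.1.symm.trans hx)
        exact hnd2 (Or.inl ⟨hx, by rw [hs.2, hsi]⟩)
      · have hsi : s = i - 1 := by
          have h1 : s + 1 = i := f.injective (hs.1.symm.trans hx)
          linear_combination h1
        have hy : y = f (i - ((1 : ℕ) : ZMod n)) := by
          rw [hs.2, hsi]; norm_num
        have ht : y :: t' = (List.range' 1 (n - 1)).map
            (fun t : ℕ => f (i - (t : ZMod n))) := by
          apply X.forced_path hn f hcyc i (y :: t') 1 le_rfl (by omega) (List.nodup_cons.mp hnd).2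
          · simpa using hy
          · rwa [List.getLast?_cons_cons] at hlast
          · exact hch'
          · intro z hz j hj
            interval_cases j
            intro hz0
            have : z = x := by rw [hz0, hx]; norm_num
            exact (List.nodup_cons.mp hnd).1 (this ▸ hz)
        have hr : List.range n = 0 :: List.range' 1 (n - 1) := by
          rw [List.range_eq_range']
          have h2 : n = (n - 1) + 1 := by omega
          rw [h2, List.range'_succ]
          simp
        rw [hr, List.map_cons, ← ht]
        congr 1
        rw [hx]
        norm_num

lemma key_le (X : FuzzyGraph V) {n : ℕ} (hn : 3 ≤ n) (f : ZMod n ≃ V)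
    (hcyc : ∀ x y : V, 0 < X.υ x y ↔ ∃ s : ZMod n,
      (x = f s ∧ y = f (s+1)) ∨ (x = f (s+1) ∧ y = f s))
    (i : ZMod n) (hb : X.BetaStrong (f i) (f (i+1)))
    (p q : V) (hpq : 0 < X.υ p q)
    (hne : s(p, q) ≠ s(f i, f (i+1))) :
    X.υ (f i) (f (i+1)) ≤ X.υ p q := by
  haveI : NeZero n := ⟨by omega⟩
  rw [hb.2]
  apply Real.sSup_le _ (X.υ_nonneg p q)
  rintro r ⟨l, hl, rfl⟩
  rw [X.path_eq hn f hcyc i l hl]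
  obtain ⟨s, hs⟩ := (hcyc p q).mp hpq
  have hsne : s ≠ i := by
    rintro rfl
    rcases hs with hs | hs
    · exact hne (by rw [hs.1, hs.2])
    · refine hne ?_
      rw [hs.1, hs.2]; exact Sym2.eq_swap
  set k : ℕ := (i - s - 1).val with hk
  have hkn : k < n := ZMod.val_lt _
  have hkcast : ((k : ℕ) : ZMod n) = i - s - 1 := ZMod.natCast_zmod_val _
  have hkne : k ≠ n - 1 := by
    intro h1
    apply hsne
    have h2 : ((k : ℕ) : ZMod n) + 1 = ((n : ℕ) : ZMod n) := by
      rw [← Nat.cast_one, ← Nat.cast_add]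
      congr 1
      omega
    have h3 : (((k + 1) : ℕ) : ZMod n) = 0 := by
      rw [show k + 1 = n by omega, ZMod.natCast_self]
    push_cast at h3
    rw [hkcast] at h3
    linear_combination -h3
  have hfs : f s = f (i - ((k + 1 : ℕ) : ZMod n)) := by
    congr 1
    push_cast
    rw [hkcast]
    ring
  have hfs1 : f (s + 1) = f (i - ((k : ℕ) : ZMod n)) := by
    congr 1
    rw [hkcast]
    ring
  have hsplit : List.range n = List.range' 0 k ++
      (k :: (k+1) :: List.range' (k+2) (n - k - 2)) := by
    rw [List.range_eq_range']
    have h1 : List.range' k (n - k) = k :: (k+1) :: List.range' (k+2) (n - k - 2) := by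
      obtain ⟨m, hm⟩ : ∃ m, n - k = m + 2 := ⟨n - k - 2, by omega⟩
      rw [hm, List.range'_succ, List.range'_succ]
      norm_num
    rw [← h1]
    have h3 := List.range'_append_1 (s := 0) (m := k) (n := n - k)
    simp only [Nat.zero_add] at h3
    rw [h3, show k + (n - k) = n by omega]
  rw [hsplit, List.map_append, List.map_cons, List.map_cons]
  refine le_trans ((X.deleteEdge (f i) (f (i+1))).pathStrength_append_le _ _ _ _) ?_
  refine le_trans (X.deleteEdge_υ_le _ _ _ _) ?_
  have hυ : X.υ (f (i - ((k : ℕ) : ZMod n))) (f (i - ((k+1 : ℕ) : ZMod n))) = X.υ p q := by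
    rcases hs with hs | hs
    · rw [hs.1, hs.2, hfs, hfs1, X.symm]
    · rw [hs.1, hs.2, hfs, hfs1]
  exact le_of_eq hυ

lemma key_le' (X : FuzzyGraph V) (hXc : X.IsCycleGraph)
    {a b : V} (hb : X.BetaStrong a b) {p q : V} (hpq : 0 < X.υ p q)
    (hne : s(p, q) ≠ s(a, b)) :
    X.υ a b ≤ X.υ p q := by
  obtain ⟨n, hn, f, hcyc⟩ := hXc
  obtain ⟨s, hs | hs⟩ := (hcyc a b).mp hb.1
  · obtain ⟨ha, hb'⟩ := hs
    subst ha; subst hb'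
    exact X.key_le hn f hcyc s hb p q hpq hne
  · obtain ⟨ha, hb'⟩ := hs
    subst ha; subst hb'
    -- reverse the cycle: e j = f (s + 1 - j)
    set e : ZMod n ≃ V := (Equiv.subLeft (s + 1)).trans f with he
    have he0 : e 0 = f (s + 1) := by simp [he, Equiv.subLeft]
    have he1 : e (0 + 1) = f s := by simp [he, Equiv.subLeft]
    have hcyc' : ∀ x y : V, 0 < X.υ x y ↔ ∃ j : ZMod n,
        (x = e j ∧ y = e (j+1)) ∨ (x = e (j+1) ∧ y = e j) := by
      intro x y
      rw [hcyc x y]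
      have hev : ∀ j : ZMod n, e j = f (s + 1 - j) := by
        intro j; simp [he, Equiv.subLeft]
      constructor
      · rintro ⟨t, ht | ht⟩
        · refine ⟨s - t, Or.inr ?_⟩
          rw [hev, hev]
          constructor
          · rw [ht.1]; congr 1; ring
          · rw [ht.2]; congr 1; ring
        · refine ⟨s - t, Or.inl ?_⟩
          rw [hev, hev]
          constructor
          · rw [ht.1]; congr 1; ring
          · rw [ht.2]; congr 1; ring
      · rintro ⟨j, hj | hj⟩
        · refine ⟨s - j, Or.inr ?_⟩
          rw [hev, hev] at hj
          constructor
          · rw [hj.1]; congr 1; ring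
          · rw [hj.2]; congr 1; ring
        · refine ⟨s - j, Or.inl ?_⟩
          rw [hev, hev] at hj
          constructor
          · rw [hj.1]; congr 1; ring
          · rw [hj.2]; congr 1; ring
    have hb2 : X.BetaStrong (e 0) (e (0 + 1)) := by rw [he0, he1]; exact hb
    have hne2 : s(p, q) ≠ s(e 0, e (0 + 1)) := by
      rw [he0, he1]
      intro h
      apply hne
      exact h
    have := X.key_le hn e hcyc' 0 hb2 p q hpq hne2
    rwa [he0, he1] at this

end FuzzyGraph
/-- In a fuzzy cycle, all β-strong edges have equal weight. -/
theorem FuzzyGraph.betaStrong_weight_eq {V : Type*} [Fintype V] [DecidableEq V]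
    (X : FuzzyGraph V) (hX : X.IsFuzzyCycle) {a b c d : V}
    (hab : X.BetaStrong a b) (hcd : X.BetaStrong c d) :
    X.υ a b = X.υ c d := by
  obtain ⟨hXc, -⟩ := hX
  by_cases h : s(a, b) = s(c, d)
  · rcases Sym2.eq_iff.mp h with ⟨rfl, rfl⟩ | ⟨rfl, rfl⟩
    · rfl
    · exact X.symm _ _
  · exact le_antisymm (X.key_le' hXc hab hcd.1 (Ne.symm h)) (X.key_le' hXc hcd hab.1 h)
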